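/- Let X be a reflexive real Banach space and let J be a closed subspace of X which is an M-ideal: there exists a bounded linear projection Q : X* → X* whose range is the annihilator J^⊥ = {η ∈ X* : η(j) = 0 for all j ∈ J} and such that ‖η‖ = ‖Q η‖ + ‖η − Q η‖ for all η ∈ X*. Then the pair (X, J) has the quotient lifting property (QLP). -/

import Mathlib

open NormedSpace

/-- If `X` is a reflexive Banach space and `J` is a closed subspace of `X`
which is an M-ideal (its annihilator `J^⊥` is an L-summand of `X*`), then the pair `(X, J)`
has the quotient lifting property (QLP). -/
theorem qlp_of_M_ideal_in_reflexive
    {X : Type*} [NormedAddCommGroup X] [NormedSpace ℝ X] [CompleteSpace X]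
    (hrefl : Function.Surjective (inclusionInDoubleDual ℝ X))
    (J : Submodule ℝ X) (hJ : IsClosed (J : Set X))
    (Q : StrongDual ℝ X →L[ℝ] StrongDual ℝ X) (hproj : ∀ η, Q (Q η) = Q η)
    (hrange : Set.range Q = {η : StrongDual ℝ X | ∀ j ∈ J, η j = 0})
    (hL : ∀ η : StrongDual ℝ X, ‖η‖ = ‖Q η‖ + ‖η - Q η‖) :
    ∀ (Y : Type*) [NormedAddCommGroup Y] [NormedSpace ℝ Y] [CompleteSpace Y]
      (S : Y →L[ℝ] X ⧸ J), ∃ T : Y →L[ℝ] X, (∀ y, J.mkQ (T y) = S y) ∧ ‖T‖ = ‖S‖ := by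
  classical
  -- The double dual embedding as a linear isometry equivalence
  have hsurj : Function.Surjective (inclusionInDoubleDualLi ℝ (E := X)) := hrefl
  set e : X ≃ₗᵢ[ℝ] StrongDual ℝ (StrongDual ℝ X) :=
    LinearIsometryEquiv.ofSurjective (inclusionInDoubleDualLi ℝ (E := X)) hsurj with he_def
  have he : ∀ (z : X) (η : StrongDual ℝ X), e z η = η z := by
    intro z η
    simp [he_def, LinearIsometryEquiv.coe_ofSurjective]
    rfl
  -- The projection P = Q* on X (via reflexivity)
  set P : X →L[ℝ] X :=
    (e.symm.toContinuousLinearEquiv.toContinuousLinearMap).comp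
      ((((ContinuousLinearMap.compL ℝ (StrongDual ℝ X) (StrongDual ℝ X) ℝ).flip Q)).comp
        e.toContinuousLinearEquiv.toContinuousLinearMap) with hP_def
  have hP : ∀ (x : X) (η : StrongDual ℝ X), η (P x) = Q η x := by
    intro x η
    have h1 : P x = e.symm ((e x).comp Q) := rfl
    have h2 : e (P x) = (e x).comp Q := by rw [h1, e.apply_symm_apply]
    have := he (P x) η
    rw [h2] at this
    simpa [he] using this.symm
  -- norm of Q is at most 1
  have hQle : ∀ η : StrongDual ℝ X, ‖Q η‖ ≤ ‖η‖ := by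
    intro η
    have := hL η
    have := norm_nonneg (η - Q η)
    linarith [hL η]
  -- Kernel of P is exactly J
  have hker : ∀ x ∈ J, P x = 0 := by
    intro x hx
    refine eq_zero_of_forall_dual_eq_zero ℝ fun η => ?_
    rw [hP x η]
    have : Q η ∈ Set.range Q := ⟨η, rfl⟩
    rw [hrange] at this
    exact this x hx
  have hmem : ∀ x : X, P x = 0 → x ∈ J := by
    intro x hx
    by_contra hxJ
    obtain ⟨f, u, hfx, hfb⟩ :=
      geometric_hahn_banach_point_closed (J.convex) hJ hxJ
    have hu0 : u < 0 := by simpa using hfb 0 (zero_mem J)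
    have hfJ : ∀ b ∈ J, f b = 0 := by
      intro b hb
      by_contra hfb0
      have ht : ((u - 1) / f b) • b ∈ J := J.smul_mem _ hb
      have := hfb _ ht
      rw [map_smul] at this
      simp only [smul_eq_mul] at this
      rw [div_mul_cancel₀ _ hfb0] at this
      linarith
    -- f is in the annihilator, hence in the range of Q
    have hfr : f ∈ Set.range Q := by
      rw [hrange]; exact fun j hj => hfJ j hj
    obtain ⟨η, hη⟩ := hfr
    have : f x = 0 := by
      rw [← hη, ← hP x η, hx, map_zero]
    linarith
  -- P is idempotent
  have hPP : ∀ x : X, P (P x) = P x := by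
    intro x
    rw [eq_iff_forall_dual_eq ℝ]
    intro η
    rw [hP (P x) η, hP x η, hP x (Q η), hproj η]
  -- P x only depends on the coset of x, with norm at most the quotient norm
  have hPle : ∀ x : X, ‖P x‖ ≤ ‖Submodule.Quotient.mk (p := J) x‖ := by
    intro x
    refine le_of_forall_pos_le_add fun ε hε => ?_
    obtain ⟨m, hm, hmlt⟩ :=
      Submodule.Quotient.norm_mk_lt (Submodule.Quotient.mk (p := J) x) hε
    have hmx : m - x ∈ J := (Submodule.Quotient.eq J).mp hm
    have hPm : P m = P x := by
      have h0 : P (m - x) = 0 := hker _ hmx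
      rw [map_sub, sub_eq_zero] at h0
      exact h0
    have hPm' : ‖P m‖ ≤ ‖m‖ := by
      calc ‖P m‖ = ‖e (P m)‖ := (e.norm_map _).symm
        _ = ‖(e m).comp Q‖ := by rw [show e (P m) = (e m).comp Q from by
              rw [show P m = e.symm ((e m).comp Q) from rfl, e.apply_symm_apply]]
        _ ≤ ‖e m‖ * ‖Q‖ := ContinuousLinearMap.opNorm_comp_le _ _
        _ ≤ ‖m‖ * 1 := by
            refine mul_le_mul ?_ ?_ (by positivity) (norm_nonneg _)
            · rw [e.norm_map]
            · exact ContinuousLinearMap.opNorm_le_bound Q zero_le_one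
                (fun η => by simpa using hQle η)
        _ = ‖m‖ := mul_one _
    calc ‖P x‖ = ‖P m‖ := by rw [hPm]
      _ ≤ ‖m‖ := hPm'
      _ ≤ ‖Submodule.Quotient.mk (p := J) x‖ + ε := le_of_lt hmlt
  -- the induced map on the quotient
  have hker' : J ≤ LinearMap.ker (P : X →ₗ[ℝ] X) := fun x hx => by
    simpa using hker x hx
  intro Y _ _ _ S
  set Tlin : Y →ₗ[ℝ] X := (J.liftQ (P : X →ₗ[ℝ] X) hker').comp (S : Y →ₗ[ℝ] X ⧸ J)
    with hTlin_def
  have hTrep : ∀ (y : Y) (x : X), Submodule.Quotient.mk (p := J) x = S y → Tlin y = P x := by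
    intro y x hx
    simp only [hTlin_def, LinearMap.comp_apply, ContinuousLinearMap.coe_coe]
    rw [← hx]
    rfl
  have hTbound : ∀ y, ‖Tlin y‖ ≤ ‖S‖ * ‖y‖ := by
    intro y
    obtain ⟨x, hx⟩ := Submodule.Quotient.mk_surjective J (S y)
    rw [hTrep y x hx]
    calc ‖P x‖ ≤ ‖Submodule.Quotient.mk (p := J) x‖ := hPle x
      _ = ‖S y‖ := by rw [hx]
      _ ≤ ‖S‖ * ‖y‖ := S.le_opNorm y
  set T : Y →L[ℝ] X := Tlin.mkContinuous ‖S‖ hTbound with hT_def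
  have hTapp : ∀ y, J.mkQ (T y) = S y := by
    intro y
    obtain ⟨x, hx⟩ := Submodule.Quotient.mk_surjective J (S y)
    have : T y = P x := hTrep y x hx
    rw [this]
    have hPx : P x - x ∈ J := by
      apply hmem
      rw [map_sub, hPP, sub_self]
    have : J.mkQ (P x) = J.mkQ x := by
      rw [Submodule.mkQ_apply, Submodule.mkQ_apply]
      exact (Submodule.Quotient.eq J).mpr hPx
    rw [this, Submodule.mkQ_apply, hx]
  refine ⟨T, hTapp, le_antisymm ?_ ?_⟩
  · exact Tlin.mkContinuous_norm_le (norm_nonneg S) hTbound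
  · refine S.opNorm_le_bound (norm_nonneg T) fun y => ?_
    calc ‖S y‖ = ‖J.mkQ (T y)‖ := by rw [hTapp y]
      _ ≤ ‖T y‖ := Submodule.Quotient.norm_mk_le J (T y)
      _ ≤ ‖T‖ * ‖y‖ := T.le_opNorm y
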